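/- Fix a real η > 1, let p_i denote the i-th prime, and for j ∈ ℕ≥1 set n_j := 1 + ∏_{i ≤ 2^{j^η}} p_i. Let B := {2} ∪ {p prime : p divides n_j for some j ∈ ℕ≥1}. Then the series ∑_{p ∈ B} 1/p converges. -/

import Mathlib

open scoped ENNReal NNReal BigOperators
open MeasureTheory

noncomputable section

/-- `e(t) = exp(2πit)`. -/
def eC (t : ℝ) : ℂ := Complex.exp (2 * Real.pi * Complex.I * t)

/-- `|x|²` for `x ∈ ℤ^d`. -/
def normSqZ {d : ℕ} (x : Fin d → ℤ) : ℤ := ∑ i, (x i) ^ 2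

/-- The natural number `r²` of an admissible radius `r`. -/
def radSq (r : ℝ) : ℕ := ⌊r ^ 2⌋₊

/-- `r` is an admissible radius: `r > 0` and `r² ∈ ℕ`. -/
def IsAdmissible (r : ℝ) : Prop := 0 < r ∧ ∃ n : ℕ, r ^ 2 = (n : ℝ)

/-- A set of positive reals is lacunary. -/
def Lacunary (R : Set ℝ) : Prop := ∃ c : ℝ, 1 < c ∧ ∀ r ∈ R, ∀ s ∈ R, r < s → c * r ≤ s

/-- `N_d(r)`: the number of lattice points on the sphere of radius `r` in `ℤ^d`. -/
def sphereCount (d : ℕ) (r : ℝ) : ℕ := Nat.card {x : Fin d → ℤ // normSqZ x = (radSq r : ℤ)}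

/-- The discrete spherical average `A_r f`. -/
def sphAvg (d : ℕ) (r : ℝ) (f : (Fin d → ℤ) → ℂ) (x : Fin d → ℤ) : ℂ :=
  (sphereCount d r : ℂ)⁻¹ *
    ∑' y : Fin d → ℤ, if normSqZ y = (radSq r : ℤ) then f (x - y) else 0

/-- The `ℓ^p(ℤ^d)` norm, valued in `ℝ≥0∞`. -/
def lpNorm (d : ℕ) (p : ℝ) (f : (Fin d → ℤ) → ℂ) : ℝ≥0∞ :=
  (∑' x : Fin d → ℤ, (‖f x‖₊ : ℝ≥0∞) ^ p) ^ (1 / p)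

/-- `(G, B)` is an admissible good/bad prime dichotomy for the set of radii `R`,
with parameter `s`. -/
def GoodBadDichotomy (R : Set ℝ) (G B : Set ℕ) (s : ℝ) : Prop :=
  (∀ p : ℕ, p.Prime → p ∈ G ∪ B) ∧
  (∀ p ∈ G, Nat.Prime p) ∧
  (∀ p ∈ B, Nat.Prime p) ∧
  (∀ p ∈ G, ∀ r ∈ R, IsUnit ((radSq r : ZMod p))) ∧
  (∀ ε : ℝ, 0 < ε → ∃ C : ℝ, 0 < C ∧ ∀ p ∈ G,
    (({z : ZMod p | ∃ r ∈ R, z = (radSq r : ZMod p)}.ncard : ℝ)) ≤ C * (p : ℝ) ^ ε) ∧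
  Summable (fun q : B => (q : ℝ) ^ (-s))

/-- `∏_{i ≤ T} p_i`, the product of the first `⌊T⌋` primes. -/
def primorialUpTo (T : ℝ) : ℕ := ∏ i ∈ Finset.range ⌊T⌋₊, Nat.nth Nat.Prime i

/-- `∏_{j₀ ≤ i ≤ T} p_i` where `p_i` is the `i`-th prime (`1`-indexed). -/
def prodPrimesFrom (j₀ : ℕ) (T : ℝ) : ℕ :=
  ∏ i ∈ Finset.Icc j₀ ⌊T⌋₊, Nat.nth Nat.Prime (i - 1)

/-- `n_j = 1 + ∏_{i ≤ 2^{j^η}} p_i`. -/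
def nseq (η : ℝ) (j : ℕ) : ℕ := 1 + primorialUpTo ((2 : ℝ) ^ ((j : ℝ) ^ η))

/-- The normalized Kloosterman sum `K(q, N; n)`. -/
def kloosterman (d q : ℕ) (N : ℤ) (n : Fin d → ℤ) : ℂ :=
  ((q : ℂ)⁻¹) ^ d *
    ∑ u : Fin q,
      if Nat.Coprime (u : ℕ) q then
        eC (-(((u : ℕ) : ℝ) * (N : ℝ)) / q) *
          ∑ b : Fin d → Fin q,
            eC ((((u : ℕ) : ℝ) * ∑ i, (((b i : ℕ) : ℝ)) ^ 2
                + ∑ i, ((b i : ℕ) : ℝ) * ((n i : ℝ))) / q)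
      else 0

/-- The Ramanujan sum `c_q(N)`. -/
def ramanujanSum (q : ℕ) (N : ℤ) : ℂ :=
  ∑ u : Fin q, if Nat.Coprime (u : ℕ) q then eC ((((u : ℕ) : ℝ) * (N : ℝ)) / q) else 0

/-- The measure `dσ_r = (2 r^{d-1})⁻¹ ℋ^{d-1} ⌞ {|x| = r}` on `ℝ^d`. -/
def sphMeasure (d : ℕ) (r : ℝ) : Measure (EuclideanSpace ℝ (Fin d)) :=
  (ENNReal.ofReal (2 * r ^ (d - 1)))⁻¹ •
    (μH[((d : ℝ) - 1)] : Measure (EuclideanSpace ℝ (Fin d))).restrict (Metric.sphere 0 r)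

/-- The Fourier transform `𝓕dσ_r(ξ) = ∫ e(x·ξ) dσ_r(x)`. -/
def fourierSphMeasure (d : ℕ) (r : ℝ) (ξ : Fin d → ℝ) : ℂ :=
  ∫ x : EuclideanSpace ℝ (Fin d), eC (∑ i, x i * ξ i) ∂(sphMeasure d r)

/-- `Ψ` is a smooth bump: supported in `[-1/4,1/4]^d` and `1` on `[-1/8,1/8]^d`. -/
def IsBump (d : ℕ) (Ψ : (Fin d → ℝ) → ℝ) : Prop :=
  ContDiff ℝ (⊤ : ℕ∞) Ψ ∧
  (∀ x, x ∉ Set.Icc (fun _ => -(1/4 : ℝ)) (fun _ => (1/4 : ℝ)) → Ψ x = 0) ∧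
  (∀ x ∈ Set.Icc (fun _ => -(1/8 : ℝ)) (fun _ => (1/8 : ℝ)), Ψ x = 1)

/-- `Ψ'` is a smooth cutoff with `1_{[-1/4,1/4]^d} ≤ Ψ' ≤ 1_{[-1/2,1/2]^d}`. -/
def IsCutoff (d : ℕ) (Ψ' : (Fin d → ℝ) → ℝ) : Prop :=
  ContDiff ℝ (⊤ : ℕ∞) Ψ' ∧
  (∀ x, Set.indicator (Set.Icc (fun _ => -(1/4 : ℝ)) (fun _ => (1/4 : ℝ)))
      (fun _ => (1 : ℝ)) x ≤ Ψ' x) ∧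
  (∀ x, Ψ' x ≤ Set.indicator (Set.Icc (fun _ => -(1/2 : ℝ)) (fun _ => (1/2 : ℝ)))
      (fun _ => (1 : ℝ)) x)

/-- The Fourier transform of `f : ℤ^d → ℂ`, `f̂(ξ) = ∑_n f(n) e(n·ξ)`. -/
def ftZ {d : ℕ} (f : (Fin d → ℤ) → ℂ) (ξ : Fin d → ℝ) : ℂ :=
  ∑' n : Fin d → ℤ, f n * eC (∑ i, (n i : ℝ) * ξ i)

/-- The Fourier multiplier operator on `ℤ^d` with 1-periodic multiplier `m`. -/
def mulOp (d : ℕ) (m : (Fin d → ℝ) → ℂ) (f : (Fin d → ℤ) → ℂ) (x : Fin d → ℤ) : ℂ :=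
  ∫ ξ in Set.Icc (0 : Fin d → ℝ) 1, m ξ * ftZ f ξ * eC (-∑ i, (x i : ℝ) * ξ i)

/-- The multiplier of `H^q_r`. -/
def mHqr (d q : ℕ) (r : ℝ) (Ψ : (Fin d → ℝ) → ℝ) (ξ : Fin d → ℝ) : ℂ :=
  ∑' n : Fin d → ℤ,
    kloosterman d q ((radSq r : ℤ)) n * ((Ψ (fun i => (q : ℝ) * ξ i - (n i : ℝ)) : ℝ) : ℂ) *
      fourierSphMeasure d r (fun i => ξ i - (n i : ℝ) / q)

/-- The multiplier of `U^{1,q}_r` for `q = q₁q₂`. -/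
def mU1 (d q₁ q₂ : ℕ) (r : ℝ) (Ψ' : (Fin d → ℝ) → ℝ) (ξ : Fin d → ℝ) : ℂ :=
  ∑' n : Fin d → ℤ,
    kloosterman d q₁ ((radSq r : ℤ)) n *
      ((Ψ' (fun i => ((q₁ * q₂ : ℕ) : ℝ) * ξ i - (n i : ℝ)) : ℝ) : ℂ)

/-- The `ℓ^p(ℤ^d) → ℓ^p(ℤ^d)` operator norm (as a supremum over finitely supported
functions in the unit ball). -/
def opNormLp (d : ℕ) (p : ℝ) (T : ((Fin d → ℤ) → ℂ) → ((Fin d → ℤ) → ℂ)) : ℝ≥0∞ :=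
  ⨆ f : {f : (Fin d → ℤ) → ℂ // (Function.support f).Finite ∧ lpNorm d p f ≤ 1},
    lpNorm d p (T f.1)

/-- `𝓕Ψ_q(ζ) = ∫_{ℝ^d} Ψ(qy) e(y·ζ) dy`. -/
def ftPsiQ (d q : ℕ) (Ψ : (Fin d → ℝ) → ℝ) (ζ : Fin d → ℝ) : ℂ :=
  ∫ y : Fin d → ℝ, ((Ψ (fun i => (q : ℝ) * y i) : ℝ) : ℂ) * eC (∑ i, y i * ζ i)

/-- The kernel `K^q_r(x) = c_q(r² - |x|²) · ((𝓕Ψ_q) * dσ_r)(x)`. -/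
def kernelK (d q : ℕ) (r : ℝ) (Ψ : (Fin d → ℝ) → ℝ) (x : Fin d → ℤ) : ℂ :=
  ramanujanSum q ((radSq r : ℤ) - normSqZ x) *
    ∫ y : EuclideanSpace ℝ (Fin d), ftPsiQ d q Ψ (fun i => ((x i : ℝ)) - y i) ∂(sphMeasure d r)

/-- Discrete convolution on `ℤ^d`. -/
def dconv {d : ℕ} (f g : (Fin d → ℤ) → ℂ) (x : Fin d → ℤ) : ℂ :=
  ∑' y : Fin d → ℤ, f y * g (x - y)

/-- `Ã_r f = f * σ_r` with `σ_r = r^{2-d} 1_{sphere}`. -/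
def tildeAvg (d : ℕ) (r : ℝ) (f : (Fin d → ℤ) → ℂ) (x : Fin d → ℤ) : ℂ :=
  (r : ℂ) ^ ((2 : ℤ) - (d : ℤ)) *
    ∑' y : Fin d → ℤ, if normSqZ y = (radSq r : ℤ) then f (x - y) else 0

/-- The error operator `E_r f = Ã_r f - ∑_{1 ≤ q ≤ r} C^q_r f`. -/
def errOp (d : ℕ) (r : ℝ) (Ψ : (Fin d → ℝ) → ℝ) (f : (Fin d → ℤ) → ℂ) (x : Fin d → ℤ) : ℂ :=
  tildeAvg d r f x - ∑ q ∈ Finset.Icc 1 ⌊r⌋₊, dconv f (kernelK d q r Ψ) x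

/-- The Euclidean norm `|x|` of `x ∈ ℤ^d`. -/
def euclNormZ {d : ℕ} (x : Fin d → ℤ) : ℝ := Real.sqrt (∑ i, ((x i : ℝ)) ^ 2)


lemma nth_prime_ge (n : ℕ) : n + 2 ≤ Nat.nth Nat.Prime n := by
  induction n with
  | zero => simp [Nat.nth_prime_zero_eq_two]
  | succ k ih =>
    have h : Nat.nth Nat.Prime k < Nat.nth Nat.Prime (k+1) :=
      (Nat.nth_lt_nth (p := Nat.Prime) Nat.infinite_setOf_prime).mpr (Nat.lt_succ_self k)
    omega

lemma prime_dvd_ge (T : ℕ) (p : ℕ) (hp : p.Prime)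
    (hd : p ∣ 1 + ∏ i ∈ Finset.range T, Nat.nth Nat.Prime i) :
    Nat.nth Nat.Prime T ≤ p := by
  by_contra h
  push_neg at h
  have hc : Nat.count Nat.Prime p < T := by
    by_contra hc
    push_neg at hc
    have h2 : Nat.nth Nat.Prime T ≤ Nat.nth Nat.Prime (Nat.count Nat.Prime p) :=
      (Nat.nth_le_nth (p := Nat.Prime) Nat.infinite_setOf_prime).mpr hc
    rw [Nat.nth_count hp] at h2
    omega
  have hdvd : p ∣ ∏ i ∈ Finset.range T, Nat.nth Nat.Prime i := by
    have : Nat.nth Nat.Prime (Nat.count Nat.Prime p) ∣ ∏ i ∈ Finset.range T, Nat.nth Nat.Prime i :=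
      Finset.dvd_prod_of_mem _ (Finset.mem_range.mpr hc)
    rwa [Nat.nth_count hp] at this
  have : p ∣ 1 := (Nat.dvd_add_right hdvd).mp (by rwa [Nat.add_comm] at hd)
  exact hp.one_lt.ne' (Nat.dvd_one.mp this)

lemma prod_primes_le (T : ℕ) (hT : 1 ≤ T) :
    ∏ i ∈ Finset.range T, Nat.nth Nat.Prime i ≤ 4 ^ (Nat.nth Nat.Prime (T-1)) := by
  classical
  set m := Nat.nth Nat.Prime (T-1) with hm
  rw [show (∏ i ∈ Finset.range T, Nat.nth Nat.Prime i)
      = ∏ p ∈ (Finset.range T).image (Nat.nth Nat.Prime), p from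
    (Finset.prod_image (f := fun p : ℕ => p) (g := Nat.nth Nat.Prime) (s := Finset.range T) (fun a _ b _ h => Nat.nth_injective Nat.infinite_setOf_prime h)).symm]
  calc ∏ p ∈ (Finset.range T).image (Nat.nth Nat.Prime), p
      ≤ ∏ p ∈ Finset.filter Nat.Prime (Finset.range (m+1)), p := by
        apply Finset.prod_le_prod_of_subset_of_one_le'
        · intro p hp
          simp only [Finset.mem_image, Finset.mem_range] at hp
          obtain ⟨i, hi, rfl⟩ := hp
          simp only [Finset.mem_filter, Finset.mem_range]
          refine ⟨Nat.lt_succ_of_le ?_, Nat.prime_nth_prime i⟩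
          exact (Nat.nth_le_nth (p := Nat.Prime) Nat.infinite_setOf_prime).mpr (by omega)
        · intro p hp _
          exact (Finset.mem_filter.mp hp).2.one_lt.le
    _ = primorial m := rfl
    _ ≤ 4 ^ m := primorial_le_4_pow m

lemma perJ (η : ℝ) (hη : 1 < η) (j : ℕ) (hj : 1 ≤ j) :
    ∑ p ∈ (nseq η j).primeFactors, (1:ℝ)/p ≤ 5 * (j:ℝ) ^ (-η) := by
  have hj1 : (1:ℝ) ≤ (j:ℝ) := by exact_mod_cast hj
  have hexp1 : (1:ℝ) ≤ (j:ℝ) ^ η := by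
    calc (1:ℝ) = (j:ℝ) ^ (0:ℝ) := (Real.rpow_zero _).symm
    _ ≤ (j:ℝ) ^ η := Real.rpow_le_rpow_of_exponent_le hj1 (by linarith)
  set x : ℝ := (2:ℝ) ^ ((j:ℝ) ^ η) with hxdef
  have hx2 : (2:ℝ) ≤ x := by
    calc (2:ℝ) = (2:ℝ) ^ (1:ℝ) := (Real.rpow_one _).symm
    _ ≤ x := Real.rpow_le_rpow_of_exponent_le one_le_two hexp1
  set T : ℕ := ⌊x⌋₊ with hTdef
  have hT2 : 2 ≤ T := Nat.le_floor (by exact_mod_cast hx2)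
  set Q : ℕ := Nat.nth Nat.Prime T with hQdef
  have hQp : Q.Prime := Nat.prime_nth_prime T
  have hQ2 : 2 ≤ Q := hQp.two_le
  set P : ℕ := ∏ i ∈ Finset.range T, Nat.nth Nat.Prime i with hPdef
  have hNP : nseq η j = 1 + P := rfl
  have hP1 : 1 ≤ P := Finset.one_le_prod' (fun i _ => (Nat.prime_nth_prime i).one_lt.le)
  set N : ℕ := nseq η j with hNdef
  have hN2 : 2 ≤ N := by omega
  -- all prime factors ≥ Q
  have hfac : ∀ p ∈ N.primeFactors, Q ≤ p := by
    intro p hp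
    exact prime_dvd_ge T p (Nat.prime_of_mem_primeFactors hp)
      (by rw [← hNP]; exact Nat.dvd_of_mem_primeFactors hp)
  set K : ℕ := N.primeFactors.card with hKdef
  have hQK : Q ^ K ≤ N := by
    calc Q ^ K ≤ ∏ p ∈ N.primeFactors, p := Finset.pow_card_le_prod _ _ _ hfac
    _ ≤ N := Nat.le_of_dvd (by omega) (Nat.prod_primeFactors_dvd N)
  have hlogQ : 0 < Real.log Q := Real.log_pos (by exact_mod_cast hQ2)
  have hKlog : (K:ℝ) * Real.log Q ≤ Real.log N := by
    have h1 : ((Q:ℝ)) ^ K ≤ (N:ℝ) := by exact_mod_cast hQK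
    have h2 := Real.log_le_log (by positivity) h1
    rwa [Real.log_pow] at h2
  -- sum ≤ K / Q
  have hsum1 : ∑ p ∈ N.primeFactors, (1:ℝ)/p ≤ (K:ℝ) * (1/(Q:ℝ)) := by
    have := Finset.sum_le_card_nsmul N.primeFactors (fun p => (1:ℝ)/p) (1/(Q:ℝ))
      (fun p hp => by
        apply one_div_le_one_div_of_le (by positivity)
        exact_mod_cast hfac p hp)
    simpa [nsmul_eq_mul] using this
  -- log N ≤ 3 Q
  have hNle : (N:ℝ) ≤ 2 ^ (2*Q+1) := by
    have h1 : N ≤ 2 * 4 ^ Q := by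
      have hPle : P ≤ 4 ^ (Nat.nth Nat.Prime (T-1)) := prod_primes_le T (by omega)
      have hmono : Nat.nth Nat.Prime (T-1) ≤ Q :=
        (Nat.nth_le_nth (p := Nat.Prime) Nat.infinite_setOf_prime).mpr (by omega)
      have : P ≤ 4 ^ Q := hPle.trans (Nat.pow_le_pow_right (by norm_num) hmono)
      omega
    have h2 : (2 : ℕ) * 4 ^ Q = 2 ^ (2*Q+1) := by
      rw [show (4:ℕ) = 2^2 from rfl, ← pow_mul, pow_succ, mul_comm, mul_comm 2 Q]
    exact_mod_cast h2 ▸ h1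
  have hlogN : Real.log N ≤ 3 * Q := by
    have h1 := Real.log_le_log (by positivity) hNle
    rw [Real.log_pow] at h1
    have hlog2 : Real.log 2 < 1 := by
      have := Real.log_two_lt_d9; linarith
    have : ((2*Q+1 : ℕ) : ℝ) * Real.log 2 ≤ (3*Q : ℝ) * 1 := by
      apply mul_le_mul _ hlog2.le (Real.log_nonneg one_le_two) (by positivity)
      push_cast; have : (1:ℝ) ≤ Q := by exact_mod_cast hQ2.trans' (by norm_num)
      linarith
    calc Real.log N ≤ ((2*Q+1 : ℕ) : ℝ) * Real.log 2 := h1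
    _ ≤ (3*Q : ℝ) * 1 := this
    _ = 3 * Q := by ring
  -- sum ≤ 3 / log Q
  have hQpos : (0:ℝ) < Q := by positivity
  have hsum2 : ∑ p ∈ N.primeFactors, (1:ℝ)/p ≤ 3 / Real.log Q := by
    have hK : (K:ℝ) ≤ Real.log N / Real.log Q := by
      rw [le_div_iff₀ hlogQ]; exact hKlog
    calc ∑ p ∈ N.primeFactors, (1:ℝ)/p ≤ (K:ℝ) * (1/(Q:ℝ)) := hsum1
    _ ≤ (Real.log N / Real.log Q) * (1/(Q:ℝ)) := by
        apply mul_le_mul_of_nonneg_right hK (by positivity)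
    _ ≤ ((3 * Q) / Real.log Q) * (1/(Q:ℝ)) := by
        apply mul_le_mul_of_nonneg_right _ (by positivity)
        gcongr
    _ = 3 / Real.log Q := by field_simp
  -- log Q ≥ j^η log 2
  have hxQ : x ≤ (Q:ℝ) := by
    have h1 : x < (T:ℝ) + 1 := Nat.lt_floor_add_one x
    have h2 : T + 2 ≤ Q := nth_prime_ge T
    have : ((T:ℝ)) + 2 ≤ (Q:ℝ) := by exact_mod_cast h2
    linarith
  have hlogQ2 : (j:ℝ) ^ η * Real.log 2 ≤ Real.log Q := by
    have := Real.log_le_log (by positivity) hxQ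
    rwa [hxdef, Real.log_rpow (by norm_num)] at this
  -- finish
  have hlog2pos : (0:ℝ) < Real.log 2 := Real.log_pos (by norm_num)
  have hjpos : (0:ℝ) < (j:ℝ) ^ η := by linarith
  have hfin : 3 / Real.log Q ≤ 5 * (j:ℝ) ^ (-η) := by
    rw [Real.rpow_neg (by positivity)]
    have hden : (0:ℝ) < (j:ℝ)^η * Real.log 2 := by positivity
    calc 3 / Real.log Q ≤ 3 / ((j:ℝ)^η * Real.log 2) := by
          apply div_le_div_of_nonneg_left (by norm_num) hden hlogQ2
    _ ≤ 5 * ((j:ℝ)^η)⁻¹ := by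
        rw [div_le_iff₀ hden]
        have h9 := Real.log_two_gt_d9
        have : (5:ℝ) * ((j:ℝ)^η)⁻¹ * ((j:ℝ)^η * Real.log 2) = 5 * Real.log 2 := by
          field_simp
        rw [this]; linarith
  calc ∑ p ∈ N.primeFactors, (1:ℝ)/p ≤ 3 / Real.log Q := hsum2
  _ ≤ 5 * (j:ℝ) ^ (-η) := hfin

lemma sum_biUnion_le' {α ι : Type*} [DecidableEq α] (f : α → ℝ) (hf : ∀ a, 0 ≤ f a)
    (s : Finset ι) (t : ι → Finset α) :
    ∑ a ∈ s.biUnion t, f a ≤ ∑ i ∈ s, ∑ a ∈ t i, f a := by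
  classical
  induction s using Finset.induction_on with
  | empty => simp
  | insert _ _ hi ih =>
    rename_i i s'
    rw [Finset.biUnion_insert, Finset.sum_insert hi]
    calc ∑ a ∈ t i ∪ s'.biUnion t, f a
        ≤ ∑ a ∈ t i, f a + ∑ a ∈ s'.biUnion t, f a := by
          have h := Finset.sum_union_inter (s₁ := t i) (s₂ := s'.biUnion t) (f := f)
          have h2 : 0 ≤ ∑ a ∈ t i ∩ s'.biUnion t, f a := Finset.sum_nonneg fun a _ => hf a
          linarith
      _ ≤ ∑ a ∈ t i, f a + ∑ i ∈ s', ∑ a ∈ t i, f a := by linarith [ih]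


theorem statement5 (η : ℝ) (hη : 1 < η) :
    Summable (fun q : ({2} ∪ {p : ℕ | p.Prime ∧ ∃ j : ℕ, 1 ≤ j ∧ p ∣ nseq η j} : Set ℕ) =>
      1 / (q : ℝ)) := by
  classical
  set S : Set ℕ := {2} ∪ {p : ℕ | p.Prime ∧ ∃ j : ℕ, 1 ≤ j ∧ p ∣ nseq η j} with hS
  have hsummable : Summable (fun j : ℕ => 5 * (j:ℝ) ^ (-η)) :=
    (Real.summable_nat_rpow.mpr (by linarith)).mul_left 5
  have hnonneg : ∀ j : ℕ, 0 ≤ 5 * (j:ℝ) ^ (-η) := fun j => by positivity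
  have key : Summable (Set.indicator S (fun p : ℕ => 1/(p:ℝ))) := by
    apply summable_of_sum_range_le (c := 1/2 + ∑' j : ℕ, 5 * (j:ℝ) ^ (-η))
    · intro n
      exact Set.indicator_nonneg (fun p _ => by positivity) n
    · intro n
      have hrw : ∑ i ∈ Finset.range n, Set.indicator S (fun p : ℕ => 1/(p:ℝ)) i
          = ∑ i ∈ (Finset.range n).filter (· ∈ S), 1/(i:ℝ) := by
        rw [Finset.sum_filter]
        apply Finset.sum_congr rfl
        intro i _
        by_cases h : i ∈ S <;> simp [Set.indicator, h]
      rw [hrw]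
      -- subset of {2} ∪ biUnion
      set U : Finset ℕ := insert 2 ((Finset.Icc 1 n).biUnion (fun j => (nseq η j).primeFactors))
        with hU
      have hsub : (Finset.range n).filter (· ∈ S) ⊆ U := by
        intro p hp
        simp only [Finset.mem_filter, Finset.mem_range] at hp
        obtain ⟨hpn, hpS⟩ := hp
        rcases hpS with h2 | ⟨hp, j, hj1, hjd⟩
        · simp only [Set.mem_singleton_iff] at h2
          subst h2
          simp [hU]
        · have hjlt : j ≤ n := by
            -- p ≥ Q_j ≥ T_j + 2 > j
            have h1 : Nat.nth Nat.Prime ⌊(2:ℝ) ^ ((j:ℝ) ^ η)⌋₊ ≤ p :=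
              prime_dvd_ge _ p hp hjd
            have h2 : ⌊(2:ℝ) ^ ((j:ℝ) ^ η)⌋₊ + 2 ≤ Nat.nth Nat.Prime ⌊(2:ℝ) ^ ((j:ℝ) ^ η)⌋₊ :=
              nth_prime_ge _
            have h3 : j ≤ ⌊(2:ℝ) ^ ((j:ℝ) ^ η)⌋₊ := by
              apply Nat.le_floor
              have hj1' : (1:ℝ) ≤ (j:ℝ) := by exact_mod_cast hj1
              have hee : (j:ℝ) ≤ (j:ℝ) ^ η := by
                calc (j:ℝ) = (j:ℝ) ^ (1:ℝ) := (Real.rpow_one _).symm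
                _ ≤ (j:ℝ) ^ η := Real.rpow_le_rpow_of_exponent_le hj1' hη.le
              calc (j:ℝ) ≤ 2 ^ (j:ℝ) := by
                    rw [Real.rpow_natCast]
                    exact_mod_cast (Nat.lt_two_pow_self (n := j)).le
              _ ≤ (2:ℝ) ^ ((j:ℝ) ^ η) :=
                    Real.rpow_le_rpow_of_exponent_le one_le_two hee
            omega
          have hmem : p ∈ (nseq η j).primeFactors := by
            rw [Nat.mem_primeFactors]
            exact ⟨hp, hjd, by unfold nseq; positivity⟩
          simp only [hU, Finset.mem_insert, Finset.mem_biUnion]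
          exact Or.inr ⟨j, Finset.mem_Icc.mpr ⟨hj1, hjlt⟩, hmem⟩
      calc ∑ i ∈ (Finset.range n).filter (· ∈ S), 1/(i:ℝ)
          ≤ ∑ i ∈ U, 1/(i:ℝ) :=
            Finset.sum_le_sum_of_subset_of_nonneg hsub (fun i _ _ => by positivity)
        _ ≤ 1/2 + ∑ i ∈ (Finset.Icc 1 n).biUnion (fun j => (nseq η j).primeFactors), 1/(i:ℝ) := by
            rw [hU]
            by_cases h2 : 2 ∈ (Finset.Icc 1 n).biUnion (fun j => (nseq η j).primeFactors)
            · rw [Finset.insert_eq_self.mpr h2]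
              have : (0:ℝ) ≤ 1/2 := by norm_num
              linarith
            · rw [Finset.sum_insert h2]; norm_num
        _ ≤ 1/2 + ∑ j ∈ Finset.Icc 1 n, ∑ p ∈ (nseq η j).primeFactors, 1/(p:ℝ) := by
            have := sum_biUnion_le' (fun i : ℕ => 1/(i:ℝ)) (fun i => by positivity)
              (Finset.Icc 1 n) (fun j => (nseq η j).primeFactors)
            linarith
        _ ≤ 1/2 + ∑ j ∈ Finset.Icc 1 n, 5 * (j:ℝ) ^ (-η) := by
            have := Finset.sum_le_sum (f := fun j => ∑ p ∈ (nseq η j).primeFactors, 1/(p:ℝ))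
              (g := fun j => 5 * (j:ℝ) ^ (-η)) (s := Finset.Icc 1 n)
              (fun j hj => perJ η hη j (Finset.mem_Icc.mp hj).1)
            linarith
        _ ≤ 1/2 + ∑' j : ℕ, 5 * (j:ℝ) ^ (-η) := by
            have := Summable.sum_le_tsum (Finset.Icc 1 n) (fun j _ => hnonneg j) hsummable
            linarith
  exact summable_subtype_iff_indicator.mpr key


end
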